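/- Suppose g : S → ℝ satisfies g(x) = min_{a ∈ A(x)} max{ g(y) : p_{xy}(a) > 0 } for every x ∈ S. Fix x ∈ S and a policy δ such that P_x^δ[A_r ∈ B_g(X_r)] = 1 for every r ∈ ℕ. Then for each n ∈ ℕ, P_x^δ-almost surely g(X_{n+1}) ≤ g(X_n) ≤ ⋯ ≤ g(X_0) = g(x); that is, the process {g(X_t)} is nonincreasing almost surely. -/

import Mathlib

open scoped Classical BigOperators ENNReal

namespace RiskSensitive

/-- A (history-dependent, randomized) policy for a finite MDP: given the past
(chronological list of (state, action) pairs) and the current state, it assigns a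
probability weight to each action, concentrated on the admissible actions. -/
structure Policy (S A : Type*) [Fintype S] [Fintype A] (Adm : S → Finset A) where
  toFun : List (S × A) → S → A → ℝ
  nonneg : ∀ h s a, 0 ≤ toFun h s a
  sum_one : ∀ h s, ∑ a, toFun h s a = 1
  supp : ∀ h s a, a ∉ Adm s → toFun h s a = 0

variable {S A : Type*} [Fintype S] [Fintype A]
variable (Adm : S → Finset A) (p : S → A → S → ℝ) (C : S → A → ℝ) (lam : ℝ)

/-- Probability of a finite trajectory (list of (action, next-state) pairs), given the
history so far and the current state. -/
noncomputable def pathProbAux (π : Policy S A Adm) :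
    List (S × A) → S → List (A × S) → ℝ
  | _, _, [] => 1
  | hist, x, (a, y) :: rest =>
      π.toFun hist x a * p x a y * pathProbAux π (hist ++ [(x, a)]) y rest

/-- `pathProb π x l` is `P_x^π[A_0 = a_0, X_1 = y_1, …]` for `l = [(a_0,y_1),…]`. -/
noncomputable def pathProb (π : Policy S A Adm) (x : S) (l : List (A × S)) : ℝ :=
  pathProbAux Adm p π [] x l

/-- Probability of a cylinder event depending on the first `n` (action, next-state) pairs. -/
noncomputable def cylProb (π : Policy S A Adm) (x : S) (n : ℕ)
    (E : (Fin n → A × S) → Prop) : ℝ :=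
  ∑ v : Fin n → A × S, if E v then pathProb Adm p π x (List.ofFn v) else 0

/-- The state `X_t` along the trajectory encoded by `l`, starting from `x`. -/
def stateAt (x : S) (l : List (A × S)) (t : ℕ) : S :=
  (l.take t).foldl (fun _ q => q.2) x

/-- The final state of the finite trajectory `l` started at `x`. -/
def lastState (x : S) (l : List (A × S)) : S :=
  l.foldl (fun _ q => q.2) x

/-- `Σ_t w(X_t, A_t)` along the finite trajectory `l` started at `x`. -/
def costSum (w : S → A → ℝ) : S → List (A × S) → ℝ
  | _, [] => 0
  | x, (a, y) :: rest => w x a + costSum w y rest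

/-- `J_n(λ,π,x) = (1/λ) log E_x^π[exp(λ Σ_{t<n} C(X_t,A_t))]`. -/
noncomputable def Jn (π : Policy S A Adm) (x : S) (n : ℕ) : ℝ :=
  (1 / lam) * Real.log (∑ v : Fin n → A × S,
    pathProb Adm p π x (List.ofFn v) * Real.exp (lam * costSum C x (List.ofFn v)))

/-- The risk-sensitive average cost `J(λ,π,x) = limsup_n J_n(λ,π,x)/n`. -/
noncomputable def Javg (π : Policy S A Adm) (x : S) : ℝ :=
  Filter.limsup (fun n : ℕ => Jn Adm p C lam π x n / n) Filter.atTop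

/-- Optimal risk-sensitive average cost `J*(λ,x)`. -/
noncomputable def Jopt (x : S) : ℝ :=
  ⨅ π : Policy S A Adm, Javg Adm p C lam π x

/-- `π` is `ε`-optimal at `x`. -/
def EpsOptimalAt (π : Policy S A Adm) (x : S) (ε : ℝ) : Prop :=
  Javg Adm p C lam π x ≤ Jopt Adm p C lam x + ε

/-- `FirstExit Q v` : the trajectory `v` leaves `{Q}` for the first time exactly at its
last step, i.e. the exit time of `Q` equals `n`. -/
def FirstExit (Q : S → Prop) {n : ℕ} (v : Fin n → A × S) : Prop :=
  0 < n ∧ (∀ t : Fin n, (t : ℕ) + 1 < n → Q (v t).2) ∧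
    ∀ t : Fin n, (t : ℕ) + 1 = n → ¬ Q (v t).2

/-- `E_x^π[ exp(Σ_{t<τ} w(X_t,A_t)) ]` where `τ = min{n ≥ 1 : ¬ Q (X_n)}` is the first
exit time from `Q` (the contribution of `[τ = ∞]` is null when `τ < ∞` a.s.). -/
noncomputable def EexitExp (π : Policy S A Adm) (x : S) (Q : S → Prop)
    (w : S → A → ℝ) : ℝ≥0∞ :=
  ∑' n : ℕ, ∑ v : Fin n → A × S,
    if FirstExit Q v then
      ENNReal.ofReal (pathProb Adm p π x (List.ofFn v) *
        Real.exp (costSum w x (List.ofFn v)))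
    else 0

/-- `E_x^π[ exp(Σ_{t<T} w(X_t,A_t)) ]` with `T` the first positive arrival time to `z`. -/
noncomputable def EhitExp (π : Policy S A Adm) (x z : S) (w : S → A → ℝ) : ℝ≥0∞ :=
  EexitExp Adm p π x (fun y => y ≠ z) w

/-- `E_x^π[T]`, the expected first positive arrival time to `z`, computed as
`Σ_{n≥0} P_x^π[T > n]`. -/
noncomputable def ExpT (π : Policy S A Adm) (x z : S) : ℝ≥0∞ :=
  ∑' n : ℕ, ENNReal.ofReal
    (cylProb Adm p π x n (fun v => ∀ t : Fin n, (v t).2 ≠ z))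

/-- `P_x^π[T > n]`, the probability that `z` is not visited during the first `n` steps. -/
noncomputable def survProb (π : Policy S A Adm) (x z : S) (n : ℕ) : ℝ :=
  cylProb Adm p π x n (fun v => ∀ t : Fin n, (v t).2 ≠ z)

/-- The stationary policy induced by a choice function `f ∈ 𝔽`. -/
noncomputable def stationary (f : S → A) (hf : ∀ s, f s ∈ Adm s) : Policy S A Adm where
  toFun := fun _ s a => if a = f s then 1 else 0
  nonneg := by intro h s a; (try dsimp only); split <;> norm_num
  sum_one := by intro h s; simp
  supp := by
    intro h s a ha
    try dsimp only
    rw [if_neg]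
    intro hEq
    exact ha (hEq ▸ hf s)

/-- The simultaneous Doeblin condition: `E_x^f[T] ≤ M` for every state `x` and every
stationary policy `f`, where `T` is the first positive arrival time to `z`. -/
def Doeblin (z : S) (M : ℝ) : Prop :=
  0 < M ∧ ∀ (x : S) (f : S → A) (hf : ∀ s, f s ∈ Adm s),
    ExpT Adm p (stationary Adm f hf) x z ≤ ENNReal.ofReal M

/-- `B_g(x) = {a ∈ A(x) : g(x) = max{g(y) : p_{xy}(a) > 0}}`. -/
def Bg (g : S → ℝ) (x : S) : Set A :=
  {a | a ∈ Adm x ∧ g x = sSup (g '' {y | 0 < p x a y})}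

/-- The family `𝒢` of functions characterizing `J*(λ,·)`. -/
def Gclass : Set (S → ℝ) :=
  {g | (∀ x, g x = sInf ((fun a => sSup (g '' {y | 0 < p x a y})) '' (Adm x : Set A))) ∧
    ∃ h : S → ℝ, ∀ x,
      sInf ((fun a => Real.exp (lam * C x a) * ∑ y, p x a y * Real.exp (lam * h y)) ''
        Bg Adm p g x) ≤ Real.exp (lam * g x + lam * h x)}

/-- The class `𝒫*` of policies which always select actions in `B*(X_t)`. -/
def Pstar : Set (Policy S A Adm) :=
  {π | ∀ (x : S) (t : ℕ),
    cylProb Adm p π x (t + 1)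
      (fun v => (v (Fin.last t)).1 ∈
        Bg Adm p (Jopt Adm p C lam) (stateAt x (List.ofFn v) t)) = 1}

/-- The deviation function
`h(x) = inf_{π ∈ 𝒫*} (1/λ) log E_x^π[exp(λα Σ_{t<T}(C(X_t,A_t) − J*(λ,X_t)))]`. -/
noncomputable def hdev (z : S) (α : ℝ) (x : S) : EReal :=
  ⨅ π ∈ Pstar Adm p C lam, ((lam⁻¹ : ℝ) : EReal) *
    ENNReal.log (EhitExp Adm p π x z
      (fun s a => lam * α * (C s a - Jopt Adm p C lam s)))

/-- `ψ(ε) = (1/λ) inf_{δ∈𝒫*} log E_z^δ[exp(λ Σ_{t<T}(C(X_t,A_t) − γ₀ − 2ε))]`. -/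
noncomputable def psi (z : S) (ε : ℝ) : EReal :=
  ((lam⁻¹ : ℝ) : EReal) * ⨅ π ∈ Pstar Adm p C lam,
    ENNReal.log (EhitExp Adm p π z z
      (fun s a => lam * (C s a - Jopt Adm p C lam z - 2 * ε)))

/-- `ξ₀ = −(1−α) log β / (λα)`. -/
noncomputable def xi0 (α β : ℝ) : ℝ := -((1 - α) * Real.log β) / (lam * α)

/-- `ξ₁`: 1 if `J*(λ,·)` is constant, otherwise the minimum gap between distinct
values of `J*(λ,·)`. -/
noncomputable def xi1 : ℝ :=
  if ∀ u v : S, Jopt Adm p C lam u = Jopt Adm p C lam v then 1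
  else sInf {d | ∃ u v : S, Jopt Adm p C lam u < Jopt Adm p C lam v ∧
    d = Jopt Adm p C lam v - Jopt Adm p C lam u}

/-- `ξ = min{ξ₀, ξ₁}`. -/
noncomputable def xi (α β : ℝ) : ℝ := min (xi0 lam α β) (xi1 Adm p C lam)

/-- The shifted policy obtained by prefixing the fixed history `pre`. -/
def shiftPolicy (π : Policy S A Adm) (pre : List (S × A)) : Policy S A Adm where
  toFun := fun h s a => π.toFun (pre ++ h) s a
  nonneg := fun h s a => π.nonneg _ s a
  sum_one := fun h s => π.sum_one _ s
  supp := fun h s a ha => π.supp _ s a ha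

/-- The history (list of (state, action) pairs) along the trajectory `l` started at `x`. -/
def histOf : S → List (A × S) → List (S × A)
  | _, [] => []
  | x, (a, y) :: rest => (x, a) :: histOf y rest


section Aux

variable {Adm} {p}

lemma pathProbAux_nonneg
    (hp : ∀ (x : S), ∀ a ∈ Adm x, (∀ y, 0 ≤ p x a y) ∧ (∑ y, p x a y) = 1)
    (π : Policy S A Adm) :
    ∀ (l : List (A × S)) (hist : List (S × A)) (x : S),
      0 ≤ pathProbAux Adm p π hist x l := by
  intro l
  induction l with
  | nil => intro hist x; simp [pathProbAux]
  | cons q rest ih =>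
      intro hist x
      obtain ⟨a, y⟩ := q
      by_cases ha : a ∈ Adm x
      · exact mul_nonneg (mul_nonneg (π.nonneg _ _ _) ((hp x a ha).1 y)) (ih _ _)
      · simp [pathProbAux, π.supp hist x a ha]

lemma sum_pathProbAux
    (hp : ∀ (x : S), ∀ a ∈ Adm x, (∀ y, 0 ≤ p x a y) ∧ (∑ y, p x a y) = 1)
    (π : Policy S A Adm) :
    ∀ (m : ℕ) (hist : List (S × A)) (x : S),
      ∑ v : Fin m → A × S, pathProbAux Adm p π hist x (List.ofFn v) = 1 := by
  intro m
  induction m with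
  | zero => intro hist x; simp [pathProbAux]
  | succ m ih =>
      intro hist x
      rw [← (Fin.consEquiv (fun _ : Fin (m + 1) => A × S)).sum_comp
        (fun v => pathProbAux Adm p π hist x (List.ofFn v))]
      have : ∀ q : (A × S) × (Fin m → A × S),
          pathProbAux Adm p π hist x (List.ofFn ((Fin.consEquiv (fun _ : Fin (m + 1) => A × S)) q))
            = π.toFun hist x q.1.1 * p x q.1.1 q.1.2 *
              pathProbAux Adm p π (hist ++ [(x, q.1.1)]) q.1.2 (List.ofFn q.2) := by
        rintro ⟨⟨a, y⟩, w⟩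
        rw [List.ofFn_succ]
        rfl
      rw [Finset.sum_congr rfl (fun q _ => this q), Fintype.sum_prod_type]
      have h2 : ∀ q : A × S,
          (∑ w : Fin m → A × S, π.toFun hist x q.1 * p x q.1 q.2 *
              pathProbAux Adm p π (hist ++ [(x, q.1)]) q.2 (List.ofFn w))
            = π.toFun hist x q.1 * p x q.1 q.2 := by
        intro q
        rw [← Finset.mul_sum, ih, mul_one]
      rw [Finset.sum_congr rfl (fun q _ => h2 q), Fintype.sum_prod_type]
      calc ∑ a : A, ∑ y : S, π.toFun hist x a * p x a y
          = ∑ a : A, π.toFun hist x a * ∑ y, p x a y := by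
            simp [Finset.mul_sum]
        _ = ∑ a : A, π.toFun hist x a := by
            refine Finset.sum_congr rfl fun a _ => ?_
            by_cases ha : a ∈ Adm x
            · rw [(hp x a ha).2, mul_one]
            · simp [π.supp hist x a ha]
        _ = 1 := π.sum_one hist x

/-- Factorization of path probability over a concatenation. -/
lemma pathProbAux_append (π : Policy S A Adm) :
    ∀ (l₁ l₂ : List (A × S)) (hist : List (S × A)) (x : S),
      pathProbAux Adm p π hist x (l₁ ++ l₂)
        = pathProbAux Adm p π hist x l₁ *
          pathProbAux Adm p π (hist ++ histOf x l₁) (lastState x l₁) l₂ := by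
  intro l₁
  induction l₁ with
  | nil => intro l₂ hist x; simp [pathProbAux, histOf, lastState]
  | cons q rest ih =>
      intro l₂ hist x
      obtain ⟨a, y⟩ := q
      show π.toFun hist x a * p x a y * pathProbAux Adm p π (hist ++ [(x, a)]) y (rest ++ l₂) = _
      rw [ih]
      have h1 : lastState x ((a, y) :: rest) = lastState y rest := rfl
      have h2 : hist ++ [(x, a)] ++ histOf y rest = hist ++ histOf x ((a, y) :: rest) := by
        simp [histOf]
      rw [h1, h2]
      show _ = π.toFun hist x a * p x a y * pathProbAux Adm p π (hist ++ [(x, a)]) y rest * _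
      ring

/-- If a cylinder event has probability one, it holds on every path of positive probability. -/
lemma event_of_cylProb_one
    (hp : ∀ (x : S), ∀ a ∈ Adm x, (∀ y, 0 ≤ p x a y) ∧ (∑ y, p x a y) = 1)
    (π : Policy S A Adm) (x : S) (m : ℕ) (E : (Fin m → A × S) → Prop)
    (hE : cylProb Adm p π x m E = 1) (v : Fin m → A × S)
    (hv : pathProb Adm p π x (List.ofFn v) ≠ 0) : E v := by
  by_contra hEv
  have htot : ∑ w : Fin m → A × S, pathProb Adm p π x (List.ofFn w) = 1 :=
    sum_pathProbAux hp π m [] x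
  have hsplit : ∑ w : Fin m → A × S, pathProb Adm p π x (List.ofFn w)
      = (∑ w : Fin m → A × S, if E w then pathProb Adm p π x (List.ofFn w) else 0)
        + ∑ w : Fin m → A × S, if E w then 0 else pathProb Adm p π x (List.ofFn w) := by
    rw [← Finset.sum_add_distrib]
    refine Finset.sum_congr rfl fun w _ => ?_
    by_cases hw : E w <;> simp [hw]
  have hzero : ∑ w : Fin m → A × S,
      (if E w then 0 else pathProb Adm p π x (List.ofFn w)) = 0 := by
    have := hE
    unfold cylProb at this
    rw [htot, this] at hsplit
    linarith
  have := (Finset.sum_eq_zero_iff_of_nonneg (fun w _ => by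
    by_cases hw : E w <;> simp [hw, pathProbAux_nonneg hp π (List.ofFn w) [] x, pathProb])).mp
    hzero v (Finset.mem_univ v)
  rw [if_neg hEv] at this
  exact hv this

lemma pathProbAux_cons (π : Policy S A Adm) (hist : List (S × A)) (x : S)
    (q : A × S) (rest : List (A × S)) :
    pathProbAux Adm p π hist x (q :: rest)
      = π.toFun hist x q.1 * p x q.1 q.2 *
        pathProbAux Adm p π (hist ++ [(x, q.1)]) q.2 rest := by
  obtain ⟨a, y⟩ := q; rfl

lemma stateAt_eq_lastState_take (x : S) (l : List (A × S)) (t : ℕ) :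
    stateAt x l t = lastState x (l.take t) := rfl

lemma lastState_append_singleton (x : S) (l : List (A × S)) (q : A × S) :
    lastState x (l ++ [q]) = q.2 := by
  simp [lastState, List.foldl_append]

lemma stateAt_succ_eq (x : S) (l : List (A × S)) (t : ℕ) (ht : t < l.length) :
    stateAt x l (t + 1) = (l[t]).2 := by
  rw [stateAt_eq_lastState_take]
  have : l.take (t + 1) = l.take t ++ [l[t]] := by
    rw [List.take_succ]; simp [List.getElem?_eq_getElem ht]
  rw [this, lastState_append_singleton]

end Aux

/-- if `g` satisfies the min–max equation and the policy `δ` always selects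
actions in `B_g(X_r)` (`P_x^δ`-a.s.), then `{g(X_t)}` is a.s. nonincreasing: for each `n`,
`P_x^δ[g(X_{n+1}) ≤ g(X_n) ≤ ⋯ ≤ g(X_0)] = 1`. -/
theorem g_nonincreasing
    (hA : ∀ x, (Adm x).Nonempty)
    (hp : ∀ (x : S), ∀ a ∈ Adm x, (∀ y, 0 ≤ p x a y) ∧ (∑ y, p x a y) = 1)
    (g : S → ℝ)
    (hg : ∀ x, g x = sInf ((fun a => sSup (g '' {y | 0 < p x a y})) '' (Adm x : Set A)))
    (x : S) (δ : Policy S A Adm)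
    (hδ : ∀ r : ℕ, cylProb Adm p δ x (r + 1)
      (fun v => (v (Fin.last r)).1 ∈ Bg Adm p g (stateAt x (List.ofFn v) r)) = 1)
    (n : ℕ) :
    cylProb Adm p δ x (n + 1)
      (fun v => ∀ t ≤ n,
        g (stateAt x (List.ofFn v) (t + 1)) ≤ g (stateAt x (List.ofFn v) t)) = 1 := by
  have key : ∀ v : Fin (n + 1) → A × S,
      pathProb Adm p δ x (List.ofFn v) ≠ 0 →
      ∀ t ≤ n, g (stateAt x (List.ofFn v) (t + 1)) ≤ g (stateAt x (List.ofFn v) t) := by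
    intro v hv t ht
    set l := List.ofFn v with hl
    have hlen : l.length = n + 1 := by simp [hl]
    have ht1 : t < l.length := by omega
    have ht2 : t + 1 ≤ n + 1 := by omega
    -- the prefix of length t+1
    set v' : Fin (t + 1) → A × S := fun i => v (Fin.castLE ht2 i) with hv'
    have hofn : List.ofFn v' = l.take (t + 1) := by
      apply List.ext_getElem
      · simp only [hl, List.length_ofFn, List.length_take]; omega
      · intro i h1 h2
        simp only [hl, hv', List.getElem_take, List.getElem_ofFn]
        rfl
    -- the prefix has positive probability
    have hsplit1 : l = l.take (t + 1) ++ l.drop (t + 1) := (List.take_append_drop _ _).symm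
    have hprefix_ne : pathProb Adm p δ x (List.ofFn v') ≠ 0 := by
      intro h0
      apply hv
      show pathProbAux Adm p δ [] x l = 0
      rw [hsplit1, pathProbAux_append, ← hofn]
      rw [show pathProbAux Adm p δ [] x (List.ofFn v') = 0 from h0, zero_mul]
    -- the a.s. selection property on the prefix
    have hBg := event_of_cylProb_one hp δ x (t + 1) _ (hδ t) v' hprefix_ne
    have hlastv' : v' (Fin.last t) = v ⟨t, by omega⟩ := rfl
    have hstate_eq : stateAt x (List.ofFn v') t = stateAt x l t := by
      have hmin : min t (t + 1) = t := by omega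
      rw [hofn, stateAt_eq_lastState_take, stateAt_eq_lastState_take, List.take_take, hmin]
    rw [hlastv', hstate_eq] at hBg
    set Xt := stateAt x l t with hXt
    set q := v ⟨t, by omega⟩ with hq
    obtain ⟨hadm, hsup⟩ := hBg
    -- positivity of the transition probability at step t
    have hget : l[t]'ht1 = q := by
      simp only [hl, hq, List.getElem_ofFn]
    have hdrop : l.drop t = q :: l.drop (t + 1) := by
      rw [List.drop_eq_getElem_cons ht1, hget]
    have hsuffix_ne : pathProbAux Adm p δ ([] ++ histOf x (l.take t)) (lastState x (l.take t))
        (l.drop t) ≠ 0 := by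
      intro h0
      apply hv
      show pathProbAux Adm p δ [] x l = 0
      rw [show l = l.take t ++ l.drop t from (List.take_append_drop _ _).symm,
        pathProbAux_append, h0, mul_zero]
    have hXt_last : lastState x (l.take t) = Xt := rfl
    rw [hXt_last, hdrop, pathProbAux_cons] at hsuffix_ne
    have hp_ne : p Xt q.1 q.2 ≠ 0 := by
      intro h0
      exact hsuffix_ne (by rw [h0]; ring)
    have hp_pos : 0 < p Xt q.1 q.2 :=
      lt_of_le_of_ne ((hp Xt q.1 hadm).1 q.2) (Ne.symm hp_ne)
    -- conclude
    have hstate_succ : stateAt x l (t + 1) = q.2 := by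
      rw [stateAt_succ_eq x l t ht1, hget]
    rw [hstate_succ, hsup]
    exact le_csSup ((Set.toFinite {z | 0 < p Xt q.1 z}).image g).bddAbove ⟨q.2, hp_pos, rfl⟩
  unfold cylProb
  rw [← sum_pathProbAux hp δ (n + 1) [] x]
  refine Finset.sum_congr rfl fun v _ => ?_
  by_cases hv : pathProb Adm p δ x (List.ofFn v) = 0
  · split
    · rfl
    · exact hv.symm
  · rw [if_pos (key v hv)]
    rfl

end RiskSensitive
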